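/- arXiv:0708.3357 — 5 statements merged into one kernel-verified Lean document; each statement's English description precedes it below -/
import Mathlib

section
/- Assume the gauge function φ exists and the constancy condition on B holds. The map χ_τ : Γ → ℂ, χ_τ(γ) = exp(iφ(γ) − 2iμ·Im⟨τ(0), ρ([1,γ])⁻¹·0⟩), satisfies the pseudo-character property χ_τ(γ+γ') = exp(2iB·Im⟨γ,γ'⟩)·χ_τ(γ)·χ_τ(γ') for all γ, γ' ∈ Γ if and only if (1/π)·φ_ρ(γ,γ') is an integer for all γ, γ' ∈ Γ. -/
noncomputable section

open Complex

/-- The group `G = 𝕋 ⋉ ℂ`, with elements `[a,b]`, acting on `ℂ` by `z ↦ a z + b`. -/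
@[ext]
structure GT : Type where
  a : Circle
  b : ℂ

namespace GT

instance : Group GT where
  mul g h := ⟨g.a * h.a, (g.a : ℂ) * h.b + g.b⟩
  one := ⟨1, 0⟩
  inv g := ⟨g.a⁻¹, -((g.a⁻¹ : ℂ) * g.b)⟩
  mul_assoc g h k := by
    refine GT.ext (mul_assoc _ _ _) ?_
    show ((g.a * h.a : Circle) : ℂ) * k.b + ((g.a : ℂ) * h.b + g.b)
        = (g.a : ℂ) * ((h.a : ℂ) * k.b + h.b) + g.b
    push_cast; ring
  one_mul g := by
    refine GT.ext (one_mul _) ?_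
    show ((1 : Circle) : ℂ) * g.b + 0 = g.b
    simp
  mul_one g := by
    refine GT.ext (mul_one _) ?_
    show (g.a : ℂ) * 0 + g.b = g.b
    simp
  inv_mul_cancel g := by
    refine GT.ext (inv_mul_cancel _) ?_
    show ((g.a⁻¹ : Circle) : ℂ) * g.b + -(((g.a : ℂ))⁻¹ * g.b) = 0
    push_cast; ring

/-- The action of `G` on `ℂ` : `[a,b]·z = a z + b`. -/
def act (g : GT) (z : ℂ) : ℂ := (g.a : ℂ) * z + g.b

end GT

/-- The Hermitian product `⟨z,w⟩ = z·conj w`. -/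
def herm (z w : ℂ) : ℂ := z * (starRingEnd ℂ) w

/-- The automorphic factor `j^α(g,z) = exp(2 i α Im⟨z, g⁻¹·0⟩)`. -/
def jfac (α : ℝ) (g : GT) (z : ℂ) : ℂ :=
  Complex.exp (2 * Complex.I * (α : ℂ) * ((herm z (GT.act g⁻¹ 0)).im : ℂ))

/-- The Wirtinger derivative `∂f/∂z = (1/2)(∂f/∂x − i ∂f/∂y)`. -/
def wderiv (f : ℂ → ℂ) (z : ℂ) : ℂ :=
  (1 / 2 : ℂ) * (fderiv ℝ f z 1 - Complex.I * fderiv ℝ f z Complex.I)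

/-- The anti-Wirtinger derivative `∂f/∂z̄ = (1/2)(∂f/∂x + i ∂f/∂y)`. -/
def wderivBar (f : ℂ → ℂ) (z : ℂ) : ℂ :=
  (1 / 2 : ℂ) * (fderiv ℝ f z 1 + Complex.I * fderiv ℝ f z Complex.I)

/-- The Euclidean Laplacian `Δ = 4 ∂²/∂z∂z̄`. -/
def lap (f : ℂ → ℂ) (z : ℂ) : ℂ := 4 * wderiv (fun w => wderivBar f w) z

/-- `S(z) = ν z + μ (τ(z)·∂τ̄/∂z̄(z) − τ̄(z)·∂τ/∂z̄(z))`. -/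
def Sfun (ν μ : ℝ) (τ : ℂ → ℂ) (z : ℂ) : ℂ :=
  (ν : ℂ) * z + (μ : ℂ) *
    (τ z * wderivBar (fun w => (starRingEnd ℂ) (τ w)) z - (starRingEnd ℂ) (τ z) * wderivBar τ z)

/-- `B(z) = ν + μ(|∂τ/∂z(z)|² − |∂τ/∂z̄(z)|²)`. -/
def Bfun (ν μ : ℝ) (τ : ℂ → ℂ) (z : ℂ) : ℝ :=
  ν + μ * (‖wderiv τ z‖ ^ 2 - ‖wderivBar τ z‖ ^ 2)

/-- The magnetic Schrödinger operator `L`. -/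
def Lop (ν μ : ℝ) (τ : ℂ → ℂ) (f : ℂ → ℂ) (z : ℂ) : ℂ :=
  - wderiv (fun w => wderivBar f w) z
    - (Sfun ν μ τ z * wderiv f z - (starRingEnd ℂ) (Sfun ν μ τ z) * wderivBar f z)
    + ((‖Sfun ν μ τ z‖ : ℂ)) ^ 2 * f z
    - ((μ : ℂ) / 4) *
        (τ z * lap (fun w => (starRingEnd ℂ) (τ w)) z - (starRingEnd ℂ) (τ z) * lap τ z) * f z

/-- The annihilation operator `A f = ∂f/∂z̄ + S f`. -/
def Aop (ν μ : ℝ) (τ : ℂ → ℂ) (f : ℂ → ℂ) (z : ℂ) : ℂ :=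
  wderivBar f z + Sfun ν μ τ z * f z

/-- The creation operator `Ã f = −∂f/∂z + conj(S) f`. -/
def Atop (ν μ : ℝ) (τ : ℂ → ℂ) (f : ℂ → ℂ) (z : ℂ) : ℂ :=
  - wderiv f z + (starRingEnd ℂ) (Sfun ν μ τ z) * f z

/-- `J(g,z) = j^ν(g,z)·j^μ(ρ(g),τ(z))`. -/
def Jfun (ν μ : ℝ) (ρ : GT → GT) (τ : ℂ → ℂ) (g : GT) (z : ℂ) : ℂ :=
  jfac ν g z * jfac μ (ρ g) (τ z)

/-- `φ_ρ(g,g') = Im(ν⟨g⁻¹·0,g'·0⟩ + μ⟨ρ(g⁻¹)·0, ρ(g')·0⟩)`. -/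
def phiRho (ν μ : ℝ) (ρ : GT → GT) (g g' : GT) : ℝ :=
  ((ν : ℂ) * herm (GT.act g⁻¹ 0) (GT.act g' 0)
    + (μ : ℂ) * herm (GT.act (ρ g⁻¹) 0) (GT.act (ρ g') 0)).im

/-- Membership in the lattice `Γ = ℤω₁ + ℤω₂`. -/
def inLattice (ω₁ ω₂ : ℂ) (γ : ℂ) : Prop := ∃ m n : ℤ, γ = (m : ℂ) * ω₁ + (n : ℂ) * ω₂

/-- Mixed `Γ`-automorphic form of type `(ν,μ)` w.r.t. the pair `(ρ,τ)`. -/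
def MixedForm (ν μ : ℝ) (ρ : GT → GT) (τ : ℂ → ℂ) (ω₁ ω₂ : ℂ) (F : ℂ → ℂ) : Prop :=
  ContDiff ℝ (⊤ : ℕ∞) F ∧ ∀ γ : ℂ, inLattice ω₁ ω₂ γ → ∀ z : ℂ,
    F (z + γ) = jfac (-ν) ⟨(1 : Circle), γ⟩ z * jfac (-μ) (ρ ⟨(1 : Circle), γ⟩) (τ z) * F z

/-- The Laguerre polynomial `L_k`. -/
def laguerre (k : ℕ) (x : ℝ) : ℝ :=
  ∑ j ∈ Finset.range (k + 1), (-1) ^ j * (k.choose j : ℝ) * x ^ j / (Nat.factorial j : ℝ)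


/-- The multiplier `χ_τ(γ) = exp(iφ(γ) − 2iμ Im⟨τ(0), ρ([1,γ])⁻¹·0⟩)`. -/
def chiTau (μ : ℝ) (ρ : GT → GT) (τ : ℂ → ℂ) (φ : ℂ → ℝ) (γ : ℂ) : ℂ :=
  Complex.exp (Complex.I * (φ γ : ℂ)
    - 2 * Complex.I * (μ : ℂ) * ((herm (τ 0) (GT.act (ρ ⟨1, γ⟩)⁻¹ 0)).im : ℂ))

/-- The eigenprojector kernel `K_k`. -/
def Kker (B : ℝ) (φ : ℂ → ℝ) (k : ℕ) (z w : ℂ) : ℂ :=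
  ((2 * B / Real.pi : ℝ) : ℂ) * Complex.exp (-Complex.I * ((φ z - φ w : ℝ) : ℂ)) *
    Complex.exp (2 * Complex.I * (B : ℂ) * ((herm z w).im : ℂ)) *
    Complex.exp (-((B * ‖z - w‖ ^ 2 : ℝ) : ℂ)) *
    ((laguerre k (2 * B * ‖z - w‖ ^ 2) : ℝ) : ℂ)

/-- The kernel `K^σ_ξ;k`. -/
def Kxi (σ : ℝ) (ξ : ℂ) (k : ℕ) (z w : ℂ) : ℂ :=
  ((2 * σ / Real.pi : ℝ) : ℂ) * Complex.exp (2 * Complex.I * ((herm (z - w) ξ).im : ℂ)) *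
    Complex.exp (2 * Complex.I * (σ : ℂ) * ((herm z w).im : ℂ)) *
    Complex.exp (-((σ * ‖z - w‖ ^ 2 : ℝ) : ℂ)) *
    ((laguerre k (2 * σ * ‖z - w‖ ^ 2) : ℝ) : ℂ)

/-- `m`-fold iterate of the creation operator `Ã`. -/
def AtopIter (ν μ : ℝ) (τ : ℂ → ℂ) (m : ℕ) (f : ℂ → ℂ) : ℂ → ℂ :=
  (fun u z => Atop ν μ τ u z)^[m] f

lemma GTmul_a (g h : GT) : (g*h).a = g.a*h.a := rfl
lemma GTmul_b (g h : GT) : (g*h).b = (g.a:ℂ)*h.b + g.b := rfl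
lemma GTinv_a (g : GT) : (g⁻¹).a = g.a⁻¹ := rfl
lemma GTinv_b (g : GT) : (g⁻¹).b = -((g.a⁻¹:ℂ) * g.b) := rfl

lemma conj_form (z : ℂ) : (starRingEnd ℂ) z = (z.re:ℂ) - (z.im:ℂ)*Complex.I := by
  apply Complex.ext <;> simp

lemma key_alg (a b x y : ℂ) :
    ((1/2)*(a - Complex.I*b)) * (x + y*Complex.I) + ((1/2)*(a + Complex.I*b)) * (x - y*Complex.I)
      = x*a + y*b := by
  linear_combination (-(y*b)) * Complex.I_mul_I

lemma ofReal_mul_im' (r : ℝ) (z : ℂ) : ((r:ℂ) * z).im = r * z.im := by simp [Complex.mul_im]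

theorem statement9 (ν μ : ℝ) (hν : 0 < ν) (hμ : 0 < μ)
    (ρ : GT →* GT) (τ : ℂ → ℂ) (hτ : ContDiff ℝ (⊤ : ℕ∞) τ)
    (hequiv : ∀ (g : GT) (z : ℂ), τ (GT.act g z) = GT.act (ρ g) (τ z))
    (B : ℝ) (hB : ∀ z : ℂ, Bfun ν μ τ z = B)
    (φ : ℂ → ℝ) (hφs : ContDiff ℝ (⊤ : ℕ∞) φ) (hφ0 : φ 0 = 0)
    (hφ : ∀ z : ℂ, wderivBar (fun w => (φ w : ℂ)) z = -Complex.I * (Sfun ν μ τ z - (B : ℂ) * z))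
    (ω₁ ω₂ : ℂ) (hω : LinearIndependent ℝ ![ω₁, ω₂]) :
    (∀ γ γ' : ℂ, inLattice ω₁ ω₂ γ → inLattice ω₁ ω₂ γ' →
        chiTau μ (⇑ρ) τ φ (γ + γ')
          = Complex.exp (2 * Complex.I * (B : ℂ) * ((herm γ γ').im : ℂ)) *
              chiTau μ (⇑ρ) τ φ γ * chiTau μ (⇑ρ) τ φ γ') ↔
      (∀ γ γ' : ℂ, inLattice ω₁ ω₂ γ → inLattice ω₁ ω₂ γ' →
        ∃ n : ℤ, (1 / Real.pi) * phiRho ν μ (⇑ρ) ⟨1, γ⟩ ⟨1, γ'⟩ = (n : ℝ)) := by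
  -- Step A : the Circle-component of ρ on translations is trivial
  have chiOne : ∀ γ : ℂ, (ρ ⟨1, γ⟩).a = 1 := by
    intro γ
    have hu : ((-1:ℂ)) ∈ Submonoid.unitSphere ℂ := by
      simp [Submonoid.unitSphere, Metric.mem_sphere]
    set u : Circle := ⟨-1, hu⟩ with hudef
    have hcu : (u : ℂ) = -1 := rfl
    set g : GT := ⟨u, 0⟩ with hg
    set h : GT := ⟨1, -γ/2⟩ with hh
    have hrep : (⟨1, γ⟩ : GT) = g * h * g⁻¹ * h⁻¹ := by
      refine GT.ext ?_ ?_
      · show (1 : Circle) = u * 1 * u⁻¹ * 1⁻¹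
        group
      · show γ = (g * h * g⁻¹ * h⁻¹).b
        simp only [GTmul_b, GTmul_a, GTinv_b, GTinv_a, hg, hh]
        push_cast [hcu]
        ring
    rw [hrep, map_mul, map_mul, map_mul, map_inv, map_inv, GTmul_a, GTmul_a, GTmul_a,
      GTinv_a, GTinv_a]
    rw [mul_comm (ρ g).a (ρ h).a]
    group
  -- ψ
  set ψ : ℂ → ℂ := fun γ => (ρ ⟨1, γ⟩).b with hψdef
  have hρform : ∀ γ : ℂ, ρ ⟨1, γ⟩ = ⟨1, ψ γ⟩ := fun γ => GT.ext (chiOne γ) rfl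
  have hψadd : ∀ γ γ' : ℂ, ψ (γ + γ') = ψ γ + ψ γ' := by
    intro γ γ'
    have hsplit : (⟨1, γ + γ'⟩ : GT) = (⟨1, γ⟩ : GT) * ⟨1, γ'⟩ := by
      refine GT.ext ?_ ?_
      · rw [GTmul_a]; exact (one_mul _).symm
      · show γ + γ' = ((1:Circle):ℂ) * γ' + γ
        simp [add_comm]
    show (ρ ⟨1, γ + γ'⟩).b = _
    rw [hsplit, map_mul, GTmul_b, hρform γ, hρform γ']
    show ((1:Circle):ℂ) * ψ γ' + ψ γ = ψ γ + ψ γ'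
    simp [add_comm]
  have hτγ : ∀ (z γ : ℂ), τ (z + γ) = τ z + ψ γ := by
    intro z γ
    have h := hequiv ⟨1, γ⟩ z
    have h1 : GT.act ⟨1, γ⟩ z = z + γ := by simp [GT.act, add_comm]
    rw [h1, hρform γ] at h
    rw [h]
    show ((1:Circle):ℂ) * τ z + ψ γ = τ z + ψ γ
    simp
  have hψτ : ∀ γ : ℂ, ψ γ = τ γ - τ 0 := by
    intro γ
    have := hτγ 0 γ
    rw [zero_add] at this
    rw [this]; ring
  -- derivative of τ is constant
  have hτd : Differentiable ℝ τ := hτ.differentiable (by simp)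
  set T : ℂ →L[ℝ] ℂ := fderiv ℝ τ 0 with hTdef
  have hfd : ∀ z : ℂ, HasFDerivAt τ T z := by
    intro z
    have h1 : HasFDerivAt (fun γ : ℂ => τ (γ + z)) T 0 := by
      have heq : (fun γ : ℂ => τ (γ + z)) = fun γ => τ γ + (τ z - τ 0) := by
        funext γ; rw [hτγ γ z, hψτ z]
      rw [heq]
      exact ((hτd 0).hasFDerivAt).add_const _
    have h2 : HasFDerivAt (fun γ : ℂ => τ (γ + z)) (fderiv ℝ τ z) 0 := by
      have h3 : HasFDerivAt (fun γ : ℂ => γ + z) (ContinuousLinearMap.id ℝ ℂ) 0 :=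
        (hasFDerivAt_id (0:ℂ)).add_const z
      have h4 := ((hτd (0 + z)).hasFDerivAt).comp 0 h3
      rw [zero_add] at h4
      exact h4
    have : fderiv ℝ τ z = T := h2.unique h1
    exact this ▸ (hτd z).hasFDerivAt
  have hψT : ∀ γ : ℂ, ψ γ = T γ := by
    have hdiff : Differentiable ℝ (fun z => τ z - T z) :=
      fun z => ((hfd z).sub (T.hasFDerivAt)).differentiableAt
    have hzero : ∀ z, fderiv ℝ (fun z => τ z - T z) z = 0 := by
      intro z
      have h5 : HasFDerivAt (fun z => τ z - T z) (T - T) z := (hfd z).sub T.hasFDerivAt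
      rw [sub_self] at h5
      exact h5.fderiv
    intro γ
    have h6 := is_const_of_fderiv_eq_zero hdiff hzero γ 0
    rw [map_zero, sub_zero] at h6
    rw [hψτ γ]
    linear_combination h6
  -- α, β
  obtain ⟨α, hαdef⟩ : ∃ a : ℂ, a = (1/2)*(T 1 - Complex.I * T Complex.I) := ⟨_, rfl⟩
  obtain ⟨β, hβdef⟩ : ∃ b : ℂ, b = (1/2)*(T 1 + Complex.I * T Complex.I) := ⟨_, rfl⟩
  have hw : ∀ z : ℂ, wderiv τ z = α := by
    intro z; rw [wderiv, (hfd z).fderiv, ← hαdef]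
  have hwb : ∀ z : ℂ, wderivBar τ z = β := by
    intro z; rw [wderivBar, (hfd z).fderiv, ← hβdef]
  have hTz : ∀ z : ℂ, T z = α * z + β * (starRingEnd ℂ) z := by
    intro z
    have hz : z = z.re • (1:ℂ) + z.im • Complex.I := by
      simp [Complex.real_smul, Complex.re_add_im]
    have h7 : T z = (z.re:ℂ) * T 1 + (z.im:ℂ) * T Complex.I := by
      conv_lhs => rw [hz]
      rw [map_add, map_smul, map_smul]
      simp [Complex.real_smul]
    have hka := key_alg (T 1) (T Complex.I) (z.re:ℂ) (z.im:ℂ)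
    rw [h7, hαdef, hβdef, conj_form z]
    linear_combination -hka + ((1/2)*(T 1 - Complex.I*T Complex.I)) * (Complex.re_add_im z)
  have hψαβ : ∀ γ : ℂ, ψ γ = α * γ + β * (starRingEnd ℂ) γ := by
    intro γ; rw [hψT γ, hTz γ]
  have hτform : ∀ z : ℂ, τ z = τ 0 + (α * z + β * (starRingEnd ℂ) z) := by
    intro z
    have := hψτ z
    rw [hψαβ z] at this
    linear_combination -this
  -- conj τ
  have hfdc : ∀ z : ℂ, HasFDerivAt (fun w => (starRingEnd ℂ) (τ w))
      ((Complex.conjCLE.toContinuousLinearMap).comp T) z := by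
    intro z
    exact (Complex.conjCLE.toContinuousLinearMap.hasFDerivAt).comp z (hfd z)
  have hwbc : ∀ z : ℂ, wderivBar (fun w => (starRingEnd ℂ) (τ w)) z = (starRingEnd ℂ) α := by
    intro z
    rw [wderivBar, (hfdc z).fderiv]
    simp only [ContinuousLinearMap.comp_apply, ContinuousLinearEquiv.coe_coe,
      Complex.conjCLE_apply, hαdef, map_mul, map_sub, map_div₀, map_one, map_ofNat,
      Complex.conj_I]
    ring
  -- B as complex identity
  have hBr : ν + μ * (‖α‖^2 - ‖β‖^2) = B := by
    have h8 := hB 0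
    rw [Bfun, hw 0, hwb 0] at h8
    exact h8
  have hBc : (B:ℂ) = (ν:ℂ) + (μ:ℂ) * (α * (starRingEnd ℂ) α - β * (starRingEnd ℂ) β) := by
    rw [← hBr]
    push_cast [Complex.sq_norm, ← Complex.mul_conj]
    ring
  -- S is affine : S z = B z + C
  obtain ⟨C, hCdef⟩ : ∃ c : ℂ,
      c = (μ:ℂ) * (τ 0 * (starRingEnd ℂ) α - (starRingEnd ℂ) (τ 0) * β) := ⟨_, rfl⟩
  have hSC : ∀ z : ℂ, Sfun ν μ τ z = (B:ℂ) * z + C := by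
    intro z
    have hct : (starRingEnd ℂ) (τ z) = (starRingEnd ℂ) (τ 0)
        + ((starRingEnd ℂ) α * (starRingEnd ℂ) z + (starRingEnd ℂ) β * z) := by
      rw [hτform z]; simp only [map_add, map_mul, Complex.conj_conj]
    rw [Sfun, hwbc z, hwb z, hct, hτform z, hCdef]
    linear_combination (-z) * hBc
  -- the gauge function is explicit
  have hφd : Differentiable ℝ φ := hφs.differentiable (by simp)
  have hL₀lin : IsLinearMap ℝ (fun z : ℂ => 2 * (C * (starRingEnd ℂ) z).im) := by
    constructor
    · intro x y; rw [map_add, mul_add, Complex.add_im]; ring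
    · intro r x
      show 2 * (C * (starRingEnd ℂ) (r • x)).im = r • (2 * (C * (starRingEnd ℂ) x).im)
      rw [Complex.real_smul, map_mul, Complex.conj_ofReal, smul_eq_mul,
        show C * ((r:ℂ) * (starRingEnd ℂ) x) = (r:ℂ) * (C * (starRingEnd ℂ) x) by ring,
        ofReal_mul_im']
      ring
  set L₀ : ℂ →L[ℝ] ℝ := LinearMap.toContinuousLinearMap (IsLinearMap.mk' _ hL₀lin) with hL₀def
  have hL₀app : ∀ z : ℂ, L₀ z = 2 * (C * (starRingEnd ℂ) z).im := fun z => rfl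
  have hL₀fd : ∀ z : ℂ, HasFDerivAt (fun z : ℂ => 2 * (C * (starRingEnd ℂ) z).im) L₀ z :=
    fun z => L₀.hasFDerivAt
  have hφeq : ∀ z : ℂ, φ z = 2 * (C * (starRingEnd ℂ) z).im := by
    have hgd : Differentiable ℝ (fun z : ℂ => φ z - 2 * (C * (starRingEnd ℂ) z).im) :=
      fun z => ((hφd z).hasFDerivAt.sub (hL₀fd z)).differentiableAt
    have hg0 : ∀ z, fderiv ℝ (fun z : ℂ => φ z - 2 * (C * (starRingEnd ℂ) z).im) z = 0 := by
      intro z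
      have hz : HasFDerivAt (fun z : ℂ => φ z - 2 * (C * (starRingEnd ℂ) z).im)
          (fderiv ℝ φ z - L₀) z := (hφd z).hasFDerivAt.sub (hL₀fd z)
      set P := fderiv ℝ φ z with hPdef
      have hPc : fderiv ℝ (fun w => ((φ w : ℝ) : ℂ)) z = Complex.ofRealCLM.comp P :=
        (Complex.ofRealCLM.hasFDerivAt.comp z (hφd z).hasFDerivAt).fderiv
      have h9 := hφ z
      rw [wderivBar, hPc, hSC z] at h9
      simp only [ContinuousLinearMap.comp_apply, Complex.ofRealCLM_apply] at h9
      have h10 : ((P 1 : ℝ) : ℂ) + Complex.I * ((P Complex.I : ℝ) : ℂ) = -2 * Complex.I * C := by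
        linear_combination 2 * h9
      have e1 : P 1 = 2 * C.im := by
        have := congrArg Complex.re h10
        simpa using this
      have e2 : P Complex.I = -2 * C.re := by
        have := congrArg Complex.im h10
        simpa using this
      have hzero : P - L₀ = 0 := by
        apply ContinuousLinearMap.ext
        intro v
        simp only [ContinuousLinearMap.sub_apply, ContinuousLinearMap.zero_apply]
        have hPv : P v = v.re * P 1 + v.im * P Complex.I := by
          have hv : v = v.re • (1:ℂ) + v.im • Complex.I := by
            simp [Complex.real_smul, Complex.re_add_im]
          conv_lhs => rw [hv]
          rw [map_add, map_smul, map_smul]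
          simp [smul_eq_mul]
        rw [hPv, e1, e2, hL₀app, conj_form v]
        simp only [mul_sub, Complex.sub_im, Complex.mul_im, Complex.mul_re,
          Complex.ofReal_re, Complex.ofReal_im, Complex.I_re, Complex.I_im]
        ring
      rw [hzero] at hz
      exact hz.fderiv
    intro z
    have h11 := is_const_of_fderiv_eq_zero hgd hg0 z 0
    simp only [hφ0, map_zero, mul_zero, Complex.zero_im, sub_zero, zero_sub] at h11
    linarith [h11]
  have hφadd : ∀ x y : ℂ, φ (x + y) = φ x + φ y := by
    intro x y
    rw [hφeq, hφeq, hφeq, map_add, mul_add, Complex.add_im]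
    ring
  -- Im (ψ γ conj (ψ γ'))
  have hψψ : ∀ γ γ' : ℂ, μ * (ψ γ * (starRingEnd ℂ) (ψ γ')).im
      = (B - ν) * (γ * (starRingEnd ℂ) γ').im := by
    intro γ γ'
    have hb : B - ν = μ * (‖α‖^2 - ‖β‖^2) := by linarith [hBr]
    rw [hb, hψαβ γ, hψαβ γ']
    simp only [map_add, map_mul, Complex.conj_conj, Complex.sq_norm, Complex.normSq_apply,
      Complex.add_im, Complex.add_re, Complex.mul_im, Complex.mul_re,
      Complex.conj_re, Complex.conj_im]
    ring
  -- actions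
  have hact1 : ∀ γ : ℂ, GT.act (⟨1, γ⟩ : GT)⁻¹ 0 = -γ := by
    intro γ
    show ((((⟨1, γ⟩:GT))⁻¹.a : Circle) : ℂ) * 0 + ((⟨1, γ⟩:GT))⁻¹.b = -γ
    rw [GTinv_b, GTinv_a]
    simp
  have hact2 : ∀ γ : ℂ, GT.act (⟨1, γ⟩ : GT) 0 = γ := by
    intro γ; show ((1:Circle):ℂ) * 0 + γ = γ; simp
  have hact3 : ∀ γ : ℂ, GT.act (ρ (⟨1, γ⟩ : GT))⁻¹ 0 = -ψ γ := by
    intro γ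
    rw [hρform γ]
    exact hact1 (ψ γ)
  have hact4 : ∀ γ : ℂ, GT.act (ρ (⟨1, γ⟩ : GT)) 0 = ψ γ := by
    intro γ; rw [hρform γ]; exact hact2 (ψ γ)
  have hact5 : ∀ γ : ℂ, GT.act (ρ ((⟨1, γ⟩ : GT)⁻¹)) 0 = -ψ γ := by
    intro γ; rw [map_inv]; exact hact3 γ
  -- phiRho value
  have hpr : ∀ γ γ' : ℂ, phiRho ν μ (⇑ρ) ⟨1, γ⟩ ⟨1, γ'⟩ = -(B * (γ * (starRingEnd ℂ) γ').im) := by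
    intro γ γ'
    rw [phiRho, hact1 γ, hact2 γ', hact5 γ, hact4 γ', herm, herm]
    rw [Complex.add_im]
    have l1 : ((ν:ℂ) * (-γ * (starRingEnd ℂ) γ')).im = -(ν * (γ * (starRingEnd ℂ) γ').im) := by
      rw [show (ν:ℂ) * (-γ * (starRingEnd ℂ) γ') = (ν:ℂ) * -(γ * (starRingEnd ℂ) γ') by ring,
        mul_neg, Complex.neg_im, ofReal_mul_im']
    have l2 : ((μ:ℂ) * (-ψ γ * (starRingEnd ℂ) (ψ γ'))).im
        = -(μ * (ψ γ * (starRingEnd ℂ) (ψ γ')).im) := by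
      rw [show (μ:ℂ) * (-ψ γ * (starRingEnd ℂ) (ψ γ')) = (μ:ℂ) * -(ψ γ * (starRingEnd ℂ) (ψ γ')) by ring,
        mul_neg, Complex.neg_im, ofReal_mul_im']
    rw [l1, l2, hψψ γ γ']
    ring
  -- chiTau in terms of θ
  set θ : ℂ → ℝ := fun γ => φ γ + 2 * μ * (τ 0 * (starRingEnd ℂ) (ψ γ)).im with hθdef
  have hθapp : ∀ γ : ℂ, θ γ = φ γ + 2 * μ * (τ 0 * (starRingEnd ℂ) (ψ γ)).im := fun _ => rfl
  have hchi : ∀ γ : ℂ, chiTau μ (⇑ρ) τ φ γ = Complex.exp (Complex.I * ((θ γ : ℝ) : ℂ)) := by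
    intro γ
    rw [chiTau, hact3 γ, herm, hθapp γ]
    congr 1
    rw [map_neg, mul_neg, Complex.neg_im]
    push_cast
    ring
  have hθadd : ∀ γ γ' : ℂ, θ (γ + γ') = θ γ + θ γ' := by
    intro γ γ'
    show φ (γ + γ') + 2 * μ * (τ 0 * (starRingEnd ℂ) (ψ (γ+γ'))).im = _
    rw [hφadd, hψadd, map_add, mul_add, Complex.add_im]
    show _ = φ γ + 2*μ*(τ 0 * (starRingEnd ℂ) (ψ γ)).im + (φ γ' + 2*μ*(τ 0 * (starRingEnd ℂ) (ψ γ')).im)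
    ring
  -- final equivalence, pointwise
  have hπ : (Real.pi : ℝ) ≠ 0 := Real.pi_ne_zero
  apply forall_congr'
  intro γ
  apply forall_congr'
  intro γ'
  apply imp_congr_right
  intro _
  apply imp_congr_right
  intro _
  rw [hchi, hchi, hchi, ← Complex.exp_add, ← Complex.exp_add, hθadd,
    Complex.exp_eq_exp_iff_exists_int, hpr γ γ']
  constructor
  · rintro ⟨n, hn⟩
    refine ⟨n, ?_⟩
    have him := congrArg Complex.im hn
    simp only [Complex.add_im, Complex.add_re, Complex.mul_im, Complex.mul_re,
      Complex.I_re, Complex.I_im, Complex.ofReal_re, Complex.ofReal_im,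
      Complex.intCast_re, Complex.intCast_im,
      Complex.re_ofNat, Complex.im_ofNat, herm] at him
    have hBx : B * (γ * (starRingEnd ℂ) γ').im = -(Real.pi * n) := by
      rw [Complex.mul_im]
      linarith [him]
    rw [hBx]
    field_simp
  · rintro ⟨n, hn⟩
    refine ⟨n, ?_⟩
    have hBx : B * (γ * (starRingEnd ℂ) γ').im = -(Real.pi * n) := by
      field_simp at hn
      rw [Complex.mul_im, Complex.conj_re, Complex.conj_im] at hn ⊢
      linarith [hn]
    have hBx2 : B * (γ.re * ((starRingEnd ℂ) γ').im + γ.im * ((starRingEnd ℂ) γ').re)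
        = -(Real.pi * n) := by
      rw [← Complex.mul_im]; exact hBx
    apply Complex.ext
    · simp [Complex.add_re, Complex.mul_re, Complex.mul_im]
    · simp only [Complex.add_im, Complex.add_re, Complex.mul_im, Complex.mul_re,
        Complex.I_re, Complex.I_im, Complex.ofReal_re, Complex.ofReal_im,
        Complex.intCast_re, Complex.intCast_im,
        Complex.re_ofNat, Complex.im_ofNat, herm]
      linarith [hBx2]
end
end

section
/- For k ∈ ℕ define the eigenprojector kernel K_k(z,w) = (2B/π)·exp(−i(φ(z)−φ(w)))·exp(2iB·Im⟨z,w⟩)·exp(−B|z−w|²)·L_k(2B|z−w|²). Then for every g ∈ G and all z, w ∈ ℂ one has the invariance property K_k(z,w) = exp(−i((φ(z)−φ(w)) − (φ(g·z)−φ(g·w))))·exp(2iB·Im⟨z−w, g⁻¹·0⟩)·K_k(g·z, g·w). -/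
noncomputable section

open Complex

theorem statement10 (B : ℝ) (hB : 0 < B) (φ : ℂ → ℝ) (k : ℕ) (g : GT) (z w : ℂ) :
    Kker B φ k z w =
      Complex.exp (-Complex.I *
          (((φ z - φ w) - (φ (GT.act g z) - φ (GT.act g w)) : ℝ) : ℂ)) *
        Complex.exp (2 * Complex.I * (B : ℂ) * ((herm (z - w) (GT.act g⁻¹ 0)).im : ℂ)) *
        Kker B φ k (GT.act g z) (GT.act g w) := by
  obtain ⟨a, b⟩ := g
  have ha : (a : ℂ) * (starRingEnd ℂ) (a : ℂ) = 1 := by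
    rw [Complex.mul_conj]
    norm_cast
    simp [Complex.normSq_eq_norm_sq, Circle.norm_coe]
  have hact0 : GT.act (⟨a, b⟩ : GT)⁻¹ 0 = -(((a⁻¹ : Circle) : ℂ) * b) := by
    show ((a⁻¹ : Circle) : ℂ) * 0 + -(((a⁻¹ : Circle) : ℂ) * b) = _
    ring
  have hdiff : GT.act ⟨a, b⟩ z - GT.act ⟨a, b⟩ w = (a : ℂ) * (z - w) := by
    show (a : ℂ) * z + b - ((a : ℂ) * w + b) = _
    ring
  have habs : ‖GT.act ⟨a, b⟩ z - GT.act ⟨a, b⟩ w‖ = ‖z - w‖ := by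
    rw [hdiff, norm_mul]; simp [Circle.norm_coe]
  have hainv : ((a⁻¹ : Circle) : ℂ) = (starRingEnd ℂ) (a : ℂ) := by
    rw [Circle.coe_inv, Complex.inv_def]
    have h1 : Complex.normSq (a : ℂ) = 1 := by
      rw [Complex.normSq_eq_norm_sq]; simp [Circle.norm_coe]
    rw [h1]; simp
  have hD : herm (z - w) (GT.act (⟨a, b⟩ : GT)⁻¹ 0)
        + herm (GT.act ⟨a, b⟩ z) (GT.act ⟨a, b⟩ w)
      = herm z w + (((a : ℂ) * w * (starRingEnd ℂ) b
          + (starRingEnd ℂ) ((a : ℂ) * w * (starRingEnd ℂ) b)) + b * (starRingEnd ℂ) b) := by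
    rw [hact0, hainv]
    simp only [herm, GT.act, map_add, map_mul, map_neg, Complex.conj_conj]
    linear_combination (z * (starRingEnd ℂ) w) * ha
  have him : ((herm z w).im : ℂ) =
      ((herm (z - w) (GT.act (⟨a, b⟩ : GT)⁻¹ 0)).im : ℂ)
        + ((herm (GT.act ⟨a, b⟩ z) (GT.act ⟨a, b⟩ w)).im : ℂ) := by
    have h2 := congrArg Complex.im hD
    simp only [Complex.add_im, Complex.add_conj, Complex.mul_conj] at h2
    simp only [Complex.ofReal_im, add_zero] at h2
    norm_cast
    linarith
  have collar : ∀ (c l p1 p2 p3 q1 q2 r1 r2 : ℂ), p1 + p2 = q1 + q2 + (r1 + r2) →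
      c * Complex.exp p1 * Complex.exp p2 * Complex.exp p3 * l
        = Complex.exp q1 * Complex.exp q2
            * (c * Complex.exp r1 * Complex.exp r2 * Complex.exp p3 * l) := by
    intro c l p1 p2 p3 q1 q2 r1 r2 h
    have e : Complex.exp p1 * Complex.exp p2
        = Complex.exp q1 * Complex.exp q2 * (Complex.exp r1 * Complex.exp r2) := by
      rw [← Complex.exp_add, ← Complex.exp_add, ← Complex.exp_add, ← Complex.exp_add, h]
    linear_combination (c * Complex.exp p3 * l) * e
  simp only [Kker, habs]
  apply collar
  push_cast
  rw [him]
  ring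
end
end

section
/- Let α, β ∈ ℂ with |α| = 1 and τ(z) = αz + β; set σ = ν + μ and ξ = μ·conj(α)·β. Then for every C^∞ function f : ℂ → ℂ and every z ∈ ℂ, (Lf)(z) = −(∂²f/∂z∂z̄)(z) − ((σz+ξ)(∂f/∂z)(z) − (σ·conj(z)+conj(ξ))(∂f/∂z̄)(z)) + |σz+ξ|²·f(z); that is, L reduces to the operator L^σ_ξ. -/
noncomputable section

open Complex

lemma hasFDerivAt_affine (α β z : ℂ) :
    HasFDerivAt (fun w : ℂ => α * w + β)
      (α • ContinuousLinearMap.id ℝ ℂ) z := by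
  simpa using ((hasFDerivAt_id (𝕜 := ℝ) z).const_mul α).add_const β

lemma fderiv_affine (α β z v : ℂ) :
    fderiv ℝ (fun w : ℂ => α * w + β) z v = α * v := by
  rw [(hasFDerivAt_affine α β z).fderiv]; simp

lemma fderiv_conj_affine (α β z v : ℂ) :
    fderiv ℝ (fun w : ℂ => (starRingEnd ℂ) (α * w + β)) z v
      = (starRingEnd ℂ) (α * v) := by
  have h : HasFDerivAt (fun w : ℂ => (starRingEnd ℂ) (α * w + β))
      ((Complex.conjCLE.toContinuousLinearMap).comp (α • ContinuousLinearMap.id ℝ ℂ)) z :=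
    (Complex.conjCLE.hasFDerivAt.comp z (hasFDerivAt_affine α β z))
  rw [h.fderiv]; simp

lemma wderiv_affine (α β z : ℂ) : wderiv (fun w : ℂ => α * w + β) z = α := by
  simp only [wderiv, fderiv_affine, mul_one]
  linear_combination (-(α / 2)) * Complex.I_mul_I

lemma wderivBar_affine (α β z : ℂ) : wderivBar (fun w : ℂ => α * w + β) z = 0 := by
  simp only [wderivBar, fderiv_affine, mul_one]
  linear_combination (α / 2) * Complex.I_mul_I

lemma wderiv_conj_affine (α β z : ℂ) :
    wderiv (fun w : ℂ => (starRingEnd ℂ) (α * w + β)) z = 0 := by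
  simp only [wderiv, fderiv_conj_affine, mul_one, map_mul, Complex.conj_I]
  linear_combination ((starRingEnd ℂ) α / 2) * Complex.I_mul_I

lemma wderivBar_conj_affine (α β z : ℂ) :
    wderivBar (fun w : ℂ => (starRingEnd ℂ) (α * w + β)) z = (starRingEnd ℂ) α := by
  simp only [wderivBar, fderiv_conj_affine, mul_one, map_mul, Complex.conj_I]
  linear_combination (-((starRingEnd ℂ) α / 2)) * Complex.I_mul_I

lemma wderiv_const (c : ℂ) (z : ℂ) : wderiv (fun _ : ℂ => c) z = 0 := by
  simp [wderiv]

lemma Sfun_affine (ν μ : ℝ) (α β : ℂ) (hα : ‖α‖ = 1) (z : ℂ) :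
    Sfun ν μ (fun w => α * w + β) z
      = ((ν + μ : ℝ) : ℂ) * z + (μ : ℂ) * (starRingEnd ℂ) α * β := by
  have h1 : α * (starRingEnd ℂ) α = 1 := by
    rw [Complex.mul_conj']
    simp [Complex.sq_norm, Complex.normSq_eq_norm_sq, hα]
  simp only [Sfun, wderivBar_conj_affine, wderivBar_affine]
  push_cast
  linear_combination (μ : ℂ) * z * h1

theorem statement13 (ν μ : ℝ) (hν : 0 < ν) (hμ : 0 < μ) (α β : ℂ)
    (hα : ‖α‖ = 1)
    (f : ℂ → ℂ) (hf : ContDiff ℝ (⊤ : ℕ∞) f) (z : ℂ) :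
    Lop ν μ (fun w => α * w + β) f z =
      - wderiv (fun w => wderivBar f w) z
        - ((((ν + μ : ℝ) : ℂ) * z + (μ : ℂ) * (starRingEnd ℂ) α * β) * wderiv f z
            - (((ν + μ : ℝ) : ℂ) * (starRingEnd ℂ) z
                + (starRingEnd ℂ) ((μ : ℂ) * (starRingEnd ℂ) α * β)) * wderivBar f z)
        + ((‖((ν + μ : ℝ) : ℂ) * z + (μ : ℂ) * (starRingEnd ℂ) α * β‖ : ℂ)) ^ 2
            * f z := by
  have lap1 : lap (fun w : ℂ => (starRingEnd ℂ) (α * w + β)) z = 0 := by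
    have : (fun w : ℂ => wderivBar (fun u : ℂ => (starRingEnd ℂ) (α * u + β)) w)
        = fun _ : ℂ => (starRingEnd ℂ) α := by
      funext w; exact wderivBar_conj_affine α β w
    simp only [lap]; rw [this, wderiv_const]; ring
  have lap2 : lap (fun w : ℂ => α * w + β) z = 0 := by
    have : (fun w : ℂ => wderivBar (fun u : ℂ => α * u + β) w)
        = fun _ : ℂ => (0 : ℂ) := by
      funext w; exact wderivBar_affine α β w
    simp only [lap]; rw [this, wderiv_const]; ring
  simp only [Lop, Sfun_affine ν μ α β hα]
  rw [lap1, lap2]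
  simp only [map_add, map_mul, Complex.conj_ofReal, Complex.conj_conj]
  ring
end
end

section
/- Assume B(z) is constant with value B and φ is a gauge function. Then the transformation W f = e^{iφ}·f intertwines L and the special Hermite (Landau) operator L^B of magnitude B: for every C^∞ function f : ℂ → ℂ and every z ∈ ℂ, e^{iφ(z)}·(Lf)(z) = (L^B g)(z) where g = e^{iφ}·f and (L^B g)(z) = −(∂²g/∂z∂z̄)(z) − B(z(∂g/∂z)(z) − conj(z)(∂g/∂z̄)(z)) + B²|z|²·g(z). -/
noncomputable section

open Complex

section WirtingerAux

lemma wderiv_mul' {f g : ℂ → ℂ} {z : ℂ} (hf : DifferentiableAt ℝ f z) (hg : DifferentiableAt ℝ g z) :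
    wderiv (fun w => f w * g w) z = wderiv f z * g z + f z * wderiv g z := by
  unfold wderiv
  rw [fderiv_fun_mul hf hg]
  simp only [ContinuousLinearMap.add_apply, ContinuousLinearMap.smul_apply, smul_eq_mul]
  ring

lemma wderivBar_mul' {f g : ℂ → ℂ} {z : ℂ} (hf : DifferentiableAt ℝ f z) (hg : DifferentiableAt ℝ g z) :
    wderivBar (fun w => f w * g w) z = wderivBar f z * g z + f z * wderivBar g z := by
  unfold wderivBar
  rw [fderiv_fun_mul hf hg]
  simp only [ContinuousLinearMap.add_apply, ContinuousLinearMap.smul_apply, smul_eq_mul]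
  ring

lemma wderiv_add' {f g : ℂ → ℂ} {z : ℂ} (hf : DifferentiableAt ℝ f z) (hg : DifferentiableAt ℝ g z) :
    wderiv (fun w => f w + g w) z = wderiv f z + wderiv g z := by
  unfold wderiv; rw [fderiv_fun_add hf hg]
  simp only [ContinuousLinearMap.add_apply]; ring

lemma wderiv_sub' {f g : ℂ → ℂ} {z : ℂ} (hf : DifferentiableAt ℝ f z) (hg : DifferentiableAt ℝ g z) :
    wderiv (fun w => f w - g w) z = wderiv f z - wderiv g z := by
  unfold wderiv; rw [fderiv_fun_sub hf hg]
  simp only [ContinuousLinearMap.sub_apply]; ring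

lemma wderiv_id' (z : ℂ) : wderiv (fun w => w) z = 1 := by
  unfold wderiv
  rw [fderiv_id']
  norm_num [Complex.I_mul_I]

lemma wderiv_const_mul' {f : ℂ → ℂ} {z : ℂ} (c : ℂ) (hf : DifferentiableAt ℝ f z) :
    wderiv (fun w => c * f w) z = c * wderiv f z := by
  unfold wderiv
  rw [fderiv_const_mul hf]
  simp only [ContinuousLinearMap.smul_apply, smul_eq_mul]
  ring

lemma wderivBar_const_mul' {f : ℂ → ℂ} {z : ℂ} (c : ℂ) (hf : DifferentiableAt ℝ f z) :
    wderivBar (fun w => c * f w) z = c * wderivBar f z := by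
  unfold wderivBar
  rw [fderiv_const_mul hf]
  simp only [ContinuousLinearMap.smul_apply, smul_eq_mul]
  ring

lemma wderiv_cexp' {c : ℂ → ℂ} {z : ℂ} (hc : DifferentiableAt ℝ c z) :
    wderiv (fun w => Complex.exp (c w)) z = Complex.exp (c z) * wderiv c z := by
  unfold wderiv
  rw [(hc.hasFDerivAt.cexp).fderiv]
  simp only [ContinuousLinearMap.smul_apply, smul_eq_mul]
  ring

lemma wderivBar_cexp' {c : ℂ → ℂ} {z : ℂ} (hc : DifferentiableAt ℝ c z) :
    wderivBar (fun w => Complex.exp (c w)) z = Complex.exp (c z) * wderivBar c z := by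
  unfold wderivBar
  rw [(hc.hasFDerivAt.cexp).fderiv]
  simp only [ContinuousLinearMap.smul_apply, smul_eq_mul]
  ring

lemma fderiv_conj_apply' {f : ℂ → ℂ} {z : ℂ} (hf : DifferentiableAt ℝ f z) (v : ℂ) :
    fderiv ℝ (fun w => (starRingEnd ℂ) (f w)) z v = (starRingEnd ℂ) (fderiv ℝ f z v) := by
  have h : HasFDerivAt (fun w => (starRingEnd ℂ) (f w))
      ((Complex.conjCLE : ℂ →L[ℝ] ℂ).comp (fderiv ℝ f z)) z :=
    (Complex.conjCLE.toContinuousLinearMap.hasFDerivAt).comp z hf.hasFDerivAt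
  rw [h.fderiv]
  rfl

lemma wderiv_conj' {f : ℂ → ℂ} {z : ℂ} (hf : DifferentiableAt ℝ f z) :
    wderiv (fun w => (starRingEnd ℂ) (f w)) z = (starRingEnd ℂ) (wderivBar f z) := by
  unfold wderiv wderivBar
  rw [fderiv_conj_apply' hf, fderiv_conj_apply' hf]
  simp only [map_mul, map_add, map_ofNat, map_one, map_div₀, Complex.conj_I]
  ring

lemma wderivBar_conj' {f : ℂ → ℂ} {z : ℂ} (hf : DifferentiableAt ℝ f z) :
    wderivBar (fun w => (starRingEnd ℂ) (f w)) z = (starRingEnd ℂ) (wderiv f z) := by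
  unfold wderiv wderivBar
  rw [fderiv_conj_apply' hf, fderiv_conj_apply' hf]
  simp only [map_mul, map_sub, map_add, map_ofNat, map_one, map_div₀, Complex.conj_I]
  ring

lemma contDiff_wderivBar' {f : ℂ → ℂ} (hf : ContDiff ℝ (⊤:ℕ∞) f) :
    ContDiff ℝ (⊤:ℕ∞) (fun w => wderivBar f w) := by
  have h1 : ContDiff ℝ (⊤:ℕ∞) (fderiv ℝ f) := hf.fderiv_right (by exact_mod_cast le_top)
  unfold wderivBar
  exact contDiff_const.mul ((h1.clm_apply contDiff_const).add
    (contDiff_const.mul (h1.clm_apply contDiff_const)))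

lemma contDiff_wderiv' {f : ℂ → ℂ} (hf : ContDiff ℝ (⊤:ℕ∞) f) :
    ContDiff ℝ (⊤:ℕ∞) (fun w => wderiv f w) := by
  have h1 : ContDiff ℝ (⊤:ℕ∞) (fderiv ℝ f) := hf.fderiv_right (by exact_mod_cast le_top)
  unfold wderiv
  exact contDiff_const.mul ((h1.clm_apply contDiff_const).sub
    (contDiff_const.mul (h1.clm_apply contDiff_const)))

lemma contDiff_conj_comp' {f : ℂ → ℂ} (hf : ContDiff ℝ (⊤:ℕ∞) f) :
    ContDiff ℝ (⊤:ℕ∞) (fun w => (starRingEnd ℂ) (f w)) :=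
  Complex.conjCLE.contDiff.comp hf

lemma contDiff_Sfun (ν μ : ℝ) {τ : ℂ → ℂ} (hτ : ContDiff ℝ (⊤:ℕ∞) τ) :
    ContDiff ℝ (⊤:ℕ∞) (Sfun ν μ τ) := by
  unfold Sfun
  exact (contDiff_const.mul contDiff_id).add (contDiff_const.mul
    ((hτ.mul (contDiff_wderivBar' (contDiff_conj_comp' hτ))).sub
      ((contDiff_conj_comp' hτ).mul (contDiff_wderivBar' hτ))))

lemma wderiv_Sfun (ν μ : ℝ) {τ : ℂ → ℂ} (hτ : ContDiff ℝ (⊤:ℕ∞) τ) (z : ℂ) :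
    wderiv (Sfun ν μ τ) z = ((Bfun ν μ τ z : ℝ) : ℂ)
      + (μ : ℂ) * (τ z * wderiv (fun w => wderivBar (fun u => (starRingEnd ℂ) (τ u)) w) z
          - (starRingEnd ℂ) (τ z) * wderiv (fun w => wderivBar τ w) z) := by
  have dat : ∀ {h : ℂ → ℂ}, ContDiff ℝ (⊤:ℕ∞) h → DifferentiableAt ℝ h z := fun hh =>
    (hh.differentiable (by simp)).differentiableAt
  have hτb : ContDiff ℝ (⊤:ℕ∞) (fun u => (starRingEnd ℂ) (τ u)) := contDiff_conj_comp' hτ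
  have h1 : wderiv (Sfun ν μ τ) z
      = wderiv (fun w => (ν:ℂ) * w) z + wderiv (fun w => (μ:ℂ) *
          (τ w * wderivBar (fun u => (starRingEnd ℂ) (τ u)) w
            - (starRingEnd ℂ) (τ w) * wderivBar τ w)) z := by
    apply wderiv_add'
    · exact (differentiableAt_const _).mul differentiableAt_id
    · exact (differentiableAt_const _).mul ((dat (hτ.mul (contDiff_wderivBar' hτb))).sub
        (dat (hτb.mul (contDiff_wderivBar' hτ))))
  rw [h1, wderiv_const_mul' (f := fun w => τ w * wderivBar (fun u => (starRingEnd ℂ) (τ u)) w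
              - (starRingEnd ℂ) (τ w) * wderivBar τ w) _ ((dat (hτ.mul (contDiff_wderivBar' hτb))).sub
        (dat (hτb.mul (contDiff_wderivBar' hτ)))),
      wderiv_sub' (dat (hτ.mul (contDiff_wderivBar' hτb))) (dat (hτb.mul (contDiff_wderivBar' hτ))),
      wderiv_mul' (dat hτ) (dat (contDiff_wderivBar' hτb)),
      wderiv_mul' (dat hτb) (dat (contDiff_wderivBar' hτ)),
      wderiv_const_mul' _ differentiableAt_fun_id, wderiv_id',
      wderivBar_conj' (dat hτ), wderiv_conj' (dat hτ)]
  unfold Bfun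
  push_cast
  rw [Complex.mul_conj, mul_comm ((starRingEnd ℂ) (wderivBar τ z)) (wderivBar τ z),
    Complex.mul_conj, ← Complex.ofReal_pow, ← Complex.ofReal_pow, Complex.sq_norm, Complex.sq_norm]
  push_cast
  ring


lemma I_mul_neg_I_mul' (x : ℂ) : Complex.I * (-Complex.I * x) = x := by
  rw [← mul_assoc, mul_neg, Complex.I_mul_I, neg_neg, one_mul]

lemma I_mul_I_mul' (x : ℂ) : Complex.I * (Complex.I * x) = -x := by
  rw [← mul_assoc, Complex.I_mul_I, neg_one_mul]

end WirtingerAux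

theorem statement16 (ν μ : ℝ) (τ : ℂ → ℂ) (hτ : ContDiff ℝ (⊤ : ℕ∞) τ)
    (B : ℝ) (hB : ∀ z : ℂ, Bfun ν μ τ z = B)
    (φ : ℂ → ℝ) (hφs : ContDiff ℝ (⊤ : ℕ∞) φ) (hφ0 : φ 0 = 0)
    (hφ : ∀ z : ℂ, wderivBar (fun w => (φ w : ℂ)) z = -Complex.I * (Sfun ν μ τ z - (B : ℂ) * z))
    (f : ℂ → ℂ) (hf : ContDiff ℝ (⊤ : ℕ∞) f) (z : ℂ) :
    Complex.exp (Complex.I * (φ z : ℂ)) * Lop ν μ τ f z =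
      - wderiv (fun w => wderivBar (fun u => Complex.exp (Complex.I * (φ u : ℂ)) * f u) w) z
        - (B : ℂ) * (z * wderiv (fun u => Complex.exp (Complex.I * (φ u : ℂ)) * f u) z
            - (starRingEnd ℂ) z * wderivBar (fun u => Complex.exp (Complex.I * (φ u : ℂ)) * f u) z)
        + ((B : ℂ)) ^ 2 * ((‖z‖ : ℂ)) ^ 2
            * (Complex.exp (Complex.I * (φ z : ℂ)) * f z) := by
  have dat : ∀ {w : ℂ} {h : ℂ → ℂ}, ContDiff ℝ (⊤:ℕ∞) h → DifferentiableAt ℝ h w := fun hh =>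
      ((hh.differentiable (by simp)).differentiableAt)
  have hτb : ContDiff ℝ (⊤:ℕ∞) (fun u => (starRingEnd ℂ) (τ u)) := contDiff_conj_comp' hτ
  have hS : ContDiff ℝ (⊤:ℕ∞) (Sfun ν μ τ) := contDiff_Sfun ν μ hτ
  have hφc : ContDiff ℝ (⊤:ℕ∞) (fun w => ((φ w : ℝ) : ℂ)) := Complex.ofRealCLM.contDiff.comp hφs
  have hcC : ContDiff ℝ (⊤:ℕ∞) (fun w => Complex.I * (φ w : ℂ)) := contDiff_const.mul hφc
  have hE : ContDiff ℝ (⊤:ℕ∞) (fun w => Complex.exp (Complex.I * (φ w : ℂ))) :=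
    Complex.contDiff_exp.comp hcC
  have hP : ContDiff ℝ (⊤:ℕ∞) (fun w => Sfun ν μ τ w - (B:ℂ) * w) :=
    hS.sub (contDiff_const.mul contDiff_id)
  have hPf : ContDiff ℝ (⊤:ℕ∞) (fun w => (Sfun ν μ τ w - (B:ℂ) * w) * f w) := hP.mul hf
  have hInner : ContDiff ℝ (⊤:ℕ∞)
      (fun w => wderivBar f w + (Sfun ν μ τ w - (B:ℂ) * w) * f w) :=
    (contDiff_wderivBar' hf).add hPf
  have hφconj : wderiv (fun u => ((φ u : ℝ):ℂ)) z
      = (starRingEnd ℂ) (wderivBar (fun u => ((φ u : ℝ):ℂ)) z) := by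
    have h1 : (fun u => ((φ u : ℝ):ℂ)) = fun u => (starRingEnd ℂ) ((φ u : ℝ):ℂ) := by
      funext u; rw [Complex.conj_ofReal]
    conv_lhs => rw [h1]
    exact wderiv_conj' (dat hφc)
  have hEbar : ∀ w : ℂ, wderivBar (fun u => Complex.exp (Complex.I * (φ u : ℂ))) w
      = Complex.exp (Complex.I * (φ w : ℂ)) * (Sfun ν μ τ w - (B:ℂ) * w) := by
    intro w
    rw [wderivBar_cexp' (dat hcC), wderivBar_const_mul' _ (dat hφc), hφ w, I_mul_neg_I_mul']
  have hGbar : ∀ w : ℂ, wderivBar (fun u => Complex.exp (Complex.I * (φ u : ℂ)) * f u) w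
      = Complex.exp (Complex.I * (φ w : ℂ))
          * (wderivBar f w + (Sfun ν μ τ w - (B:ℂ) * w) * f w) := by
    intro w
    rw [wderivBar_mul' (dat hE) (dat hf), hEbar w]
    ring
  have hEz : wderiv (fun u => Complex.exp (Complex.I * (φ u : ℂ))) z
      = - (Complex.exp (Complex.I * (φ z : ℂ))
          * (starRingEnd ℂ) (Sfun ν μ τ z - (B:ℂ) * z)) := by
    rw [wderiv_cexp' (dat hcC), wderiv_const_mul' _ (dat hφc), hφconj, hφ z]
    simp only [map_mul, map_neg, Complex.conj_I, neg_neg]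
    rw [I_mul_I_mul']
    ring
  have hGz : wderiv (fun u => Complex.exp (Complex.I * (φ u : ℂ)) * f u) z
      = Complex.exp (Complex.I * (φ z : ℂ))
          * (wderiv f z - (starRingEnd ℂ) (Sfun ν μ τ z - (B:ℂ) * z) * f z) := by
    rw [wderiv_mul' (dat hE) (dat hf), hEz]
    ring
  have hSz : wderiv (Sfun ν μ τ) z = (B:ℂ)
      + (μ:ℂ) * (τ z * wderiv (fun w => wderivBar (fun u => (starRingEnd ℂ) (τ u)) w) z
          - (starRingEnd ℂ) (τ z) * wderiv (fun w => wderivBar τ w) z) := by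
    rw [wderiv_Sfun ν μ hτ z, hB z]
  have key : wderiv (fun w => wderivBar
        (fun u => Complex.exp (Complex.I * (φ u : ℂ)) * f u) w) z
      = - (Complex.exp (Complex.I * (φ z : ℂ))
            * (starRingEnd ℂ) (Sfun ν μ τ z - (B:ℂ) * z))
          * (wderivBar f z + (Sfun ν μ τ z - (B:ℂ) * z) * f z)
        + Complex.exp (Complex.I * (φ z : ℂ))
          * (wderiv (fun w => wderivBar f w) z
            + (((B:ℂ) + (μ:ℂ) * (τ z * wderiv (fun w => wderivBar
                  (fun u => (starRingEnd ℂ) (τ u)) w) z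
                - (starRingEnd ℂ) (τ z) * wderiv (fun w => wderivBar τ w) z)) - (B:ℂ)) * f z
            + (Sfun ν μ τ z - (B:ℂ) * z) * wderiv f z) := by
    have h1 : (fun w => wderivBar (fun u => Complex.exp (Complex.I * (φ u : ℂ)) * f u) w)
        = fun w => Complex.exp (Complex.I * (φ w : ℂ))
            * (wderivBar f w + (Sfun ν μ τ w - (B:ℂ) * w) * f w) := funext hGbar
    rw [h1, wderiv_mul' (dat hE) (dat hInner),
      wderiv_add' (dat (contDiff_wderivBar' hf)) (dat hPf),
      wderiv_mul' (dat hP) (dat hf),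
      wderiv_sub' (dat hS) ((differentiableAt_const ((B:ℝ):ℂ)).fun_mul differentiableAt_fun_id),
      wderiv_const_mul' _ differentiableAt_fun_id, wderiv_id', hEz, hSz]
    ring
  rw [key, hGz, hGbar z]
  unfold Lop lap
  simp only [← Complex.ofReal_pow, Complex.sq_norm, ← Complex.mul_conj]
  simp only [map_sub, map_mul, Complex.conj_ofReal]
  push_cast
  ring
end
end

section
/- For every equivariant pair (ρ,τ), every g = [a,b] ∈ G and every z ∈ ℂ, the function z ↦ J(g,z) satisfies (∂/∂z)[J(g,·)](z) = (conj(S(z)) − a·conj(S(g·z)))·J(g,z) and (∂/∂z̄)[J(g,·)](z) = −(S(z) − conj(a)·S(g·z))·J(g,z) (the Wirtinger-derivative form of the cohomology identity g*θ = θ − i·dJ(g,·)/J(g,·)). -/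
noncomputable section

open Complex

open ComplexConjugate in
/-- The real-linear map `v ↦ p v + q (conj v)`. -/
def PQ (p q : ℂ) : ℂ →L[ℝ] ℂ :=
  p • (ContinuousLinearMap.id ℝ ℂ) + q • (Complex.conjCLE : ℂ ≃L[ℝ] ℂ).toContinuousLinearMap

open ComplexConjugate

@[simp] lemma PQ_apply (p q v : ℂ) : PQ p q v = p * v + q * conj v := by
  simp [PQ, Complex.conjCLE_apply, smul_eq_mul]

lemma clm_decomp (ℓ : ℂ →L[ℝ] ℂ) (v : ℂ) :
    ℓ v = ((1/2 : ℂ) * (ℓ 1 - I * ℓ I)) * v + ((1/2 : ℂ) * (ℓ 1 + I * ℓ I)) * conj v := by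
  have hv : v = (v.re : ℝ) • (1 : ℂ) + (v.im : ℝ) • (I : ℂ) := by
    simp [Complex.real_smul, Complex.re_add_im]
  rw [hv, map_add, map_smul, map_smul]
  simp only [Complex.real_smul, map_add, map_mul, map_one, Complex.conj_ofReal, Complex.conj_I]
  ring_nf
  rw [Complex.I_sq]
  ring

lemma wderiv_of_hasFDerivAt {f : ℂ → ℂ} {z p q : ℂ} (h : HasFDerivAt f (PQ p q) z) :
    wderiv f z = p ∧ wderivBar f z = q := by
  rw [wderiv, wderivBar, h.fderiv]
  simp only [PQ_apply, map_one, Complex.conj_I]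
  constructor
  · ring_nf; rw [Complex.I_sq]; ring
  · ring_nf; rw [Complex.I_sq]; ring

lemma hasFDerivAt_wderiv (f : ℂ → ℂ) (z : ℂ) (hf : DifferentiableAt ℝ f z) :
    HasFDerivAt f (PQ (wderiv f z) (wderivBar f z)) z := by
  refine hf.hasFDerivAt.congr_fderiv ?_
  ext v
  rw [PQ_apply, clm_decomp (fderiv ℝ f z) v, wderiv, wderivBar]

lemma hasFDerivAt_conj_comp {f : ℂ → ℂ} {z p q : ℂ} (h : HasFDerivAt f (PQ p q) z) :
    HasFDerivAt (fun w => conj (f w)) (PQ (conj q) (conj p)) z := by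
  have hc : HasFDerivAt (fun w : ℂ => conj w)
      (Complex.conjCLE : ℂ ≃L[ℝ] ℂ).toContinuousLinearMap (f z) :=
    (Complex.conjCLE : ℂ ≃L[ℝ] ℂ).toContinuousLinearMap.hasFDerivAt
  refine (hc.comp z h).congr_fderiv ?_
  ext v
  simp only [ContinuousLinearMap.coe_comp', Function.comp_apply, PQ_apply,
    ContinuousLinearEquiv.coe_coe, Complex.conjCLE_apply, map_add, map_mul,
    Complex.conj_conj]
  ring

lemma PQ_inj {p q p' q' : ℂ} (h : PQ p q = PQ p' q') : p = p' ∧ q = q' := by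
  have e1 := DFunLike.congr_fun h 1
  have e2 := DFunLike.congr_fun h I
  simp only [PQ_apply, map_one, mul_one, Complex.conj_I] at e1 e2
  constructor
  · linear_combination e1 / 2 - I * e2 / 2 + (p/2 - q/2 - p'/2 + q'/2) * Complex.I_sq
  · linear_combination e1 / 2 + I * e2 / 2 - (p/2 - q/2 - p'/2 + q'/2) * Complex.I_sq

lemma jfac_exp (α : ℝ) (g : GT) (z : ℂ) :
    jfac α g z = Complex.exp ((α : ℂ) *
      (z * conj (GT.act g⁻¹ 0) - conj z * GT.act g⁻¹ 0)) := by
  rw [jfac]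
  congr 1
  rw [Complex.im_eq_sub_conj, herm]
  have : conj (z * conj (GT.act g⁻¹ 0)) = conj z * GT.act g⁻¹ 0 := by
    rw [map_mul, Complex.conj_conj]
  rw [this]
  have hI : (2 : ℂ) * I ≠ 0 := by simp [Complex.I_ne_zero]
  field_simp

theorem statement17 (ν μ : ℝ) (hν : 0 < ν) (hμ : 0 < μ)
    (ρ : GT →* GT) (τ : ℂ → ℂ) (hτ : ContDiff ℝ (⊤ : ℕ∞) τ)
    (hequiv : ∀ (g : GT) (z : ℂ), τ (GT.act g z) = GT.act (ρ g) (τ z))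
    (g : GT) (z : ℂ) :
    wderiv (fun w => Jfun ν μ (⇑ρ) τ g w) z
        = ((starRingEnd ℂ) (Sfun ν μ τ z)
            - (g.a : ℂ) * (starRingEnd ℂ) (Sfun ν μ τ (GT.act g z))) * Jfun ν μ (⇑ρ) τ g z ∧
    wderivBar (fun w => Jfun ν μ (⇑ρ) τ g w) z
        = -(Sfun ν μ τ z - (starRingEnd ℂ) ((g.a : ℂ)) * Sfun ν μ τ (GT.act g z))
            * Jfun ν μ (⇑ρ) τ g z := by
  have hτd : ∀ w : ℂ, DifferentiableAt ℝ τ w := fun w =>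
    (hτ.differentiable (by simp)).differentiableAt
  set A : ℂ := (g.a : ℂ) with hAdef
  set χ : ℂ := ((ρ g).a : ℂ) with hχdef
  set ψ : ℂ := (ρ g).b with hψdef
  set p : ℂ := wderiv τ z with hpdef
  set q : ℂ := wderivBar τ z with hqdef
  set p' : ℂ := wderiv τ (GT.act g z) with hp'def
  set q' : ℂ := wderivBar τ (GT.act g z) with hq'def
  have hA1 : A * conj A = 1 := by
    rw [Complex.mul_conj, Circle.normSq_coe]; norm_num
  have hχ1 : χ * conj χ = 1 := by
    rw [Complex.mul_conj, Circle.normSq_coe]; norm_num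
  have hA0 : A ≠ 0 := Circle.coe_ne_zero g.a
  have hχ0 : χ ≠ 0 := Circle.coe_ne_zero (ρ g).a
  have hcA : conj A = A⁻¹ := by
    field_simp
    linear_combination hA1
  have hcχ : conj χ = χ⁻¹ := by
    field_simp
    linear_combination hχ1
  -- the base points
  have hc : GT.act g⁻¹ 0 = -(conj A * g.b) := by
    show ((g⁻¹.a : ℂ)) * 0 + (g⁻¹).b = _
    have h1 : (g⁻¹).b = -(((g.a⁻¹ : Circle) : ℂ) * g.b) := rfl
    rw [h1, Circle.coe_inv_eq_conj]
    ring
  have hc' : GT.act (ρ g)⁻¹ 0 = -(conj χ * ψ) := by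
    show (((ρ g)⁻¹.a : ℂ)) * 0 + ((ρ g)⁻¹).b = _
    have h1 : ((ρ g)⁻¹).b = -((((ρ g).a⁻¹ : Circle) : ℂ) * (ρ g).b) := rfl
    rw [h1, Circle.coe_inv_eq_conj]
    ring
  -- τ at the moved point
  have hτgz : τ (GT.act g z) = χ * τ z + ψ := by rw [hequiv g z]; rfl
  -- basic derivatives
  have hτz : HasFDerivAt τ (PQ p q) z := hasFDerivAt_wderiv τ z (hτd z)
  have hcτz : HasFDerivAt (fun w => conj (τ w)) (PQ (conj q) (conj p)) z :=
    hasFDerivAt_conj_comp hτz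
  have hid : HasFDerivAt (fun w : ℂ => w) (PQ 1 0) z := by
    refine (hasFDerivAt_id z).congr_fderiv ?_
    ext v; simp
  have hconj : HasFDerivAt (fun w : ℂ => conj w) (PQ 0 1) z := by
    simpa using hasFDerivAt_conj_comp hid
  -- equivariance of derivatives
  have hact : HasFDerivAt (fun w : ℂ => GT.act g w) (PQ A 0) z := by
    show HasFDerivAt (fun w : ℂ => A * w + g.b) (PQ A 0) z
    refine (((hasFDerivAt_id z).const_mul A).add_const g.b).congr_fderiv ?_
    ext v
    simp [PQ_apply]
  have hLcomp : HasFDerivAt (fun w => τ (GT.act g w)) ((PQ p' q').comp (PQ A 0)) z :=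
    (hasFDerivAt_wderiv τ (GT.act g z) (hτd _)).comp z hact
  have hR : HasFDerivAt (fun w => τ (GT.act g w)) (PQ (χ * p) (χ * q)) z := by
    have hfun : (fun w => τ (GT.act g w)) = fun w => χ * τ w + ψ :=
      funext fun w => by rw [hequiv g w]; rfl
    rw [hfun]
    refine ((hτz.const_mul χ).add_const ψ).congr_fderiv ?_
    ext v
    simp only [ContinuousLinearMap.coe_smul', Pi.smul_apply, PQ_apply, smul_eq_mul]
    ring
  have hcompPQ : (PQ p' q').comp (PQ A 0) = PQ (p' * A) (q' * conj A) := by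
    ext v
    simp only [ContinuousLinearMap.coe_comp', Function.comp_apply, PQ_apply, map_add,
      map_mul, map_zero, Complex.conj_conj]
    ring
  obtain ⟨hp', hq'⟩ := PQ_inj (hcompPQ ▸ hLcomp.unique hR)
  have hp2 : p' = χ * conj A * p := by linear_combination conj A * hp' - p' * hA1
  have hq2 : q' = χ * A * q := by linear_combination A * hq' - q' * hA1
  -- wderivBar of conj ∘ τ
  have hwbc : ∀ x : ℂ, wderivBar (fun w => conj (τ w)) x = conj (wderiv τ x) := fun x =>
    (wderiv_of_hasFDerivAt (hasFDerivAt_conj_comp (hasFDerivAt_wderiv τ x (hτd x)))).2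
  -- S at z and at g·z
  have hSz : Sfun ν μ τ z = (ν : ℂ) * z + (μ : ℂ) * (τ z * conj p - conj (τ z) * q) := by
    rw [Sfun, hwbc z]
  have hSgz : Sfun ν μ τ (GT.act g z)
      = (ν : ℂ) * (A * z + g.b)
        + (μ : ℂ) * ((χ * τ z + ψ) * conj p' - conj (χ * τ z + ψ) * q') := by
    rw [Sfun, hwbc (GT.act g z), hτgz]
    rfl
  -- the exponent
  set c : ℂ := GT.act g⁻¹ 0 with hcdef
  set c' : ℂ := GT.act (ρ g)⁻¹ 0 with hc'def
  set E : ℂ → ℂ := fun w =>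
    (ν : ℂ) * (w * conj c - conj w * c) + (μ : ℂ) * (τ w * conj c' - conj (τ w) * c')
    with hEdef
  have hJ : ∀ w : ℂ, Jfun ν μ (⇑ρ) τ g w = Complex.exp (E w) := fun w => by
    rw [Jfun, jfac_exp, jfac_exp, ← Complex.exp_add, hEdef]
  set pE : ℂ := (ν : ℂ) * conj c + (μ : ℂ) * (p * conj c' - conj q * c') with hpEdef
  set qE : ℂ := -(ν : ℂ) * c + (μ : ℂ) * (q * conj c' - conj p * c') with hqEdef
  have hE : HasFDerivAt E (PQ pE qE) z := by
    refine ((((hid.mul_const (conj c)).sub (hconj.mul_const c)).const_mul (ν : ℂ)).add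
      ((((hτz.mul_const (conj c')).sub (hcτz.mul_const c')).const_mul (μ : ℂ)))).congr_fderiv ?_
    ext v
    simp only [ContinuousLinearMap.add_apply, ContinuousLinearMap.coe_smul', Pi.smul_apply,
      ContinuousLinearMap.coe_sub', Pi.sub_apply, smul_eq_mul, PQ_apply, hpEdef, hqEdef]
    ring
  have hJd : HasFDerivAt (fun w => Jfun ν μ (⇑ρ) τ g w)
      (PQ (Complex.exp (E z) * pE) (Complex.exp (E z) * qE)) z := by
    have hfun : (fun w => Jfun ν μ (⇑ρ) τ g w) = fun w => Complex.exp (E w) := funext hJ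
    rw [hfun]
    refine hE.cexp.congr_fderiv ?_
    ext v
    simp only [ContinuousLinearMap.coe_smul', Pi.smul_apply, PQ_apply, smul_eq_mul]
    ring
  obtain ⟨W1, W2⟩ := wderiv_of_hasFDerivAt hJd
  have key1 : pE = conj (Sfun ν μ τ z) - A * conj (Sfun ν μ τ (GT.act g z)) := by
    rw [hSz, hSgz, hp2, hq2, hpEdef, hc, hc']
    simp only [map_add, map_sub, map_mul, map_neg, Complex.conj_conj, Complex.conj_ofReal]
    rw [hcA, hcχ]
    field_simp
    ring
  have key2 : qE = -(Sfun ν μ τ z - conj A * Sfun ν μ τ (GT.act g z)) := by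
    rw [hSz, hSgz, hp2, hq2, hqEdef, hc, hc']
    simp only [map_add, map_sub, map_mul, map_neg, Complex.conj_conj, Complex.conj_ofReal]
    rw [hcA, hcχ]
    field_simp
    ring
  refine ⟨?_, ?_⟩
  · rw [W1, hJ z, key1]; ring
  · rw [W2, hJ z, key2]; ring
end
end
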